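/- Let T be a finite set, let X be an S-open subset of a product ∏_{t∈T} X_t of topological spaces, and let (Y,d) be a metric space. Then every strongly separately continuous mapping f : (X,τ) → Y is continuous with respect to the Tychonoff topology τ. -/

import Mathlib

open Function Filter Topology

/-- `Sigma1 x` (σ₁(x)): the set of points differing from `x` in at most one coordinate. -/
def Sigma1 {T : Type*} {X : T → Type*} (x : ∀ t, X t) : Set (∀ t, X t) :=
  {y | {t | y t ≠ x t}.Subsingleton}

/-- A set `A` is `S`-open if `σ₁(x) ⊆ A` for every `x ∈ A`. -/
def SOpen {T : Type*} {X : T → Type*} (A : Set (∀ t, X t)) : Prop :=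
  ∀ x ∈ A, Sigma1 x ⊆ A

theorem update_mem {T : Type*} [DecidableEq T] {X : T → Type*} {A : Set (∀ t, X t)}
    (hA : SOpen A) {x : ∀ t, X t} (hx : x ∈ A) (t : T) (v : X t) :
    Function.update x t v ∈ A := by
  apply hA x hx
  intro s hs s' hs'
  simp only [Set.mem_setOf_eq] at hs hs'
  have h1 : s = t := by
    by_contra h
    exact hs (Function.update_of_ne h v x)
  have h2 : s' = t := by
    by_contra h
    exact hs' (Function.update_of_ne h v x)
  rw [h1, h2]

/-- The point `x_t^v`: `x` with its `t`-th coordinate replaced by `v`, as an element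
of the `S`-open set `A`. -/
def updPt {T : Type*} [DecidableEq T] {X : T → Type*} {A : Set (∀ t, X t)}
    (hA : SOpen A) (x : ↥A) (t : T) (v : X t) : ↥A :=
  ⟨Function.update x.1 t v, update_mem hA x.2 t v⟩

/-- `f : (A, T') → Y` is strongly separately continuous at `a` (w.r.t. every variable):
for each `t`, `lim_{x → a} dist (f x) (f (x_t^a)) = 0`, the limit taken in `T'`. -/
def StrSepContAt {T : Type*} [DecidableEq T] {X : T → Type*} {A : Set (∀ t, X t)}
    (hA : SOpen A) (T' : TopologicalSpace ↥A) {Y : Type*} [MetricSpace Y]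
    (f : ↥A → Y) (a : ↥A) : Prop :=
  ∀ t : T, Filter.Tendsto (fun x : ↥A => dist (f x) (f (updPt hA x t (a.1 t))))
    (@nhds _ T' a) (nhds 0)

/-- Auxiliary chain: replace the first `k` coordinates (in the enumeration `e`) of `x`
by those of `a`. -/
def chainPt {T : Type*} [DecidableEq T] {X : T → Type*} {A : Set (∀ t, X t)}
    (hA : SOpen A) {n : ℕ} (e : Fin n ≃ T) (a : ↥A) : ℕ → ↥A → ↥A
  | 0, x => x
  | (k+1), x =>
    if h : k < n then updPt hA (chainPt hA e a k x) (e ⟨k, h⟩) (a.1 (e ⟨k, h⟩))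
    else chainPt hA e a k x

theorem chainPt_apply {T : Type*} [DecidableEq T] {X : T → Type*} {A : Set (∀ t, X t)}
    (hA : SOpen A) {n : ℕ} (e : Fin n ≃ T) (a : ↥A) (k : ℕ) (x : ↥A) (t : T) :
    (chainPt hA e a k x).1 t = if (e.symm t : ℕ) < k then a.1 t else x.1 t := by
  induction k with
  | zero => simp [chainPt]
  | succ k ih =>
    rw [chainPt]
    by_cases h : k < n
    · rw [dif_pos h]
      simp only [updPt]
      by_cases ht : t = e ⟨k, h⟩
      · subst ht
        rw [Function.update_self]
        rw [if_pos]
        simp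
      · rw [Function.update_of_ne ht, ih]
        have hne : (e.symm t : ℕ) ≠ k := by
          intro hh
          apply ht
          have : e.symm t = ⟨k, h⟩ := Fin.ext hh
          rw [← this, Equiv.apply_symm_apply]
        congr 1
        simp only [eq_iff_iff]
        omega
    · rw [dif_neg h]
      rw [ih]
      have : (e.symm t : ℕ) < n := (e.symm t).2
      congr 1
      simp only [eq_iff_iff]
      omega

theorem chainPt_self {T : Type*} [DecidableEq T] {X : T → Type*} {A : Set (∀ t, X t)}
    (hA : SOpen A) {n : ℕ} (e : Fin n ≃ T) (a : ↥A) (k : ℕ) :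
    chainPt hA e a k a = a := by
  apply Subtype.ext
  funext t
  rw [chainPt_apply]
  split <;> rfl

theorem chainPt_top {T : Type*} [DecidableEq T] {X : T → Type*} {A : Set (∀ t, X t)}
    (hA : SOpen A) {n : ℕ} (e : Fin n ≃ T) (a : ↥A) (x : ↥A) :
    chainPt hA e a n x = a := by
  apply Subtype.ext
  funext t
  rw [chainPt_apply, if_pos (e.symm t).2]

theorem chainPt_continuous {T : Type*} [DecidableEq T] {X : T → Type*}
    [∀ t, TopologicalSpace (X t)] {A : Set (∀ t, X t)}
    (hA : SOpen A) {n : ℕ} (e : Fin n ≃ T) (a : ↥A) (k : ℕ) :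
    Continuous (chainPt hA e a k) := by
  induction k with
  | zero => exact continuous_id
  | succ k ih =>
    rw [show chainPt hA e a (k+1) = fun x => chainPt hA e a (k+1) x from rfl]
    simp only [chainPt]
    by_cases h : k < n
    · simp only [dif_pos h]
      exact Continuous.subtype_mk
        ((continuous_subtype_val.comp ih).update _ continuous_const) _
    · simpa only [dif_neg h] using ih

/-- Over a finite index set, every strongly separately continuous mapping on an S-open
set with the Tychonoff topology is continuous. -/
theorem strSepCont_continuous_of_finite {T : Type*} [DecidableEq T] [Finite T]
    {X : T → Type*} [∀ t, TopologicalSpace (X t)] {A : Set (∀ t, X t)} (hA : SOpen A)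
    {Y : Type*} [MetricSpace Y] (f : ↥A → Y)
    (hf : ∀ a : ↥A, StrSepContAt hA inferInstance f a) :
    Continuous f := by
  have : Fintype T := Fintype.ofFinite T
  set n := Fintype.card T with hn
  let e : Fin n ≃ T := (Fintype.equivFin T).symm
  rw [continuous_iff_continuousAt]
  intro a
  rw [ContinuousAt, tendsto_iff_dist_tendsto_zero]
  have hsum : Tendsto (fun x : ↥A => ∑ k ∈ Finset.range n,
      dist (f (chainPt hA e a k x)) (f (chainPt hA e a (k+1) x))) (nhds a) (nhds 0) := by
    rw [show (0:ℝ) = ∑ _k ∈ Finset.range n, (0:ℝ) by simp]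
    apply tendsto_finset_sum
    intro k hk
    have hkn : k < n := Finset.mem_range.mp hk
    have hterm : (fun x : ↥A => dist (f (chainPt hA e a k x)) (f (chainPt hA e a (k+1) x)))
        = (fun y : ↥A => dist (f y) (f (updPt hA y (e ⟨k, hkn⟩) (a.1 (e ⟨k, hkn⟩)))))
          ∘ (chainPt hA e a k) := by
      funext x
      simp [chainPt, dif_pos hkn, Function.comp]
    rw [hterm]
    apply Tendsto.comp (hf a (e ⟨k, hkn⟩))
    have hc := (chainPt_continuous hA e a k).continuousAt (x := a)
    rwa [ContinuousAt, chainPt_self] at hc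
  apply squeeze_zero (fun _ => dist_nonneg) _ hsum
  intro x
  have h0 : f x = f (chainPt hA e a 0 x) := rfl
  have htop : f a = f (chainPt hA e a n x) := by rw [chainPt_top]
  rw [h0, htop]
  exact dist_le_range_sum_dist (fun k => f (chainPt hA e a k x)) n
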